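/- Let σ : ℝ → ℝ be 1-Lipschitz with σ(0) = 0, and let L ≥ 1. Let θ = (W_1,…,W_L) and θ' = (W'_1,…,W'_L) be parameters of two bias-free networks with the same architecture (L, (N_0,…,N_L)), and for ℓ = 1,…,L−1 let θ'_ℓ = (W'_1,…,W'_ℓ) be the truncated network of depth ℓ. Then for every x ∈ ℝ^{N_0}: ‖R_θ(x) − R_{θ'}(x)‖_∞ ≤ Σ_{ℓ=1}^{L} (∏_{k=ℓ+1}^{L} ‖W_k‖_{op,∞}) · ‖W_ℓ − W'_ℓ‖_{op,∞} · ‖R_{θ'_{ℓ−1}}(x)‖_∞, with the conventions R_{θ'_0}(x) = x and ∏_{k=L+1}^{L} ‖W_k‖_{op,∞} = 1. -/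

import Mathlib

/-- The ℓ∞ operator norm of a real matrix: `sup_{‖x‖∞ = 1} ‖Ax‖∞`
(the norm on `n → ℝ` is the sup norm). -/
noncomputable def opNormInf {m n : Type*} [Fintype m] [Fintype n] (A : Matrix m n ℝ) : ℝ :=
  sSup ((fun x : n → ℝ => ‖A.mulVec x‖) '' {x | ‖x‖ = 1})

/-- Realization of a bias-free network: layer `ℓ` (0-indexed) has weight matrix
`W ℓ ∈ ℝ^{N (ℓ+1) × N ℓ}`, the activation `σ` is applied componentwise.
`realize σ N W ℓ x` is the realization of the depth-`ℓ` truncated network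
`θ_ℓ = (W_1, …, W_ℓ)` at `x`; for `ℓ = 0` it equals `x`. -/
noncomputable def realize (σ : ℝ → ℝ) (N : ℕ → ℕ)
    (W : ∀ ℓ : ℕ, Matrix (Fin (N (ℓ + 1))) (Fin (N ℓ)) ℝ) :
    (L : ℕ) → (Fin (N 0) → ℝ) → Fin (N L) → ℝ
  | 0, x => x
  | L + 1, x => fun i => σ ((W L).mulVec (realize σ N W L x) i)

lemma opNormInf_nonneg {m n : Type*} [Fintype m] [Fintype n] (A : Matrix m n ℝ) :
    0 ≤ opNormInf A :=
  Real.sSup_nonneg (by rintro y ⟨x, -, rfl⟩; exact norm_nonneg _)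

lemma opNormInf_bddAbove {m n : Type*} [Fintype m] [Fintype n] (A : Matrix m n ℝ) :
    BddAbove ((fun x : n → ℝ => ‖A.mulVec x‖) '' {x | ‖x‖ = 1}) := by
  refine ⟨∑ i, ∑ j, |A i j|, ?_⟩
  rintro y ⟨x, hx, rfl⟩
  have hC : 0 ≤ ∑ i, ∑ j, |A i j| :=
    Finset.sum_nonneg fun i _ => Finset.sum_nonneg fun j _ => abs_nonneg _
  rw [pi_norm_le_iff_of_nonneg hC]
  intro i
  calc ‖A.mulVec x i‖ = |∑ j, A i j * x j| := rfl
    _ ≤ ∑ j, |A i j * x j| := Finset.abs_sum_le_sum_abs _ _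
    _ ≤ ∑ j, |A i j| := by
        refine Finset.sum_le_sum fun j _ => ?_
        rw [abs_mul]
        have : |x j| ≤ 1 := hx ▸ norm_le_pi_norm x j
        nlinarith [abs_nonneg (A i j)]
    _ ≤ ∑ i, ∑ j, |A i j| :=
        Finset.single_le_sum (f := fun i => ∑ j, |A i j|) (fun i _ => Finset.sum_nonneg fun j _ => abs_nonneg _)
          (Finset.mem_univ i)

lemma norm_mulVec_le {m n : Type*} [Fintype m] [Fintype n] (A : Matrix m n ℝ)
    (v : n → ℝ) : ‖A.mulVec v‖ ≤ opNormInf A * ‖v‖ := by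
  rcases eq_or_ne v 0 with rfl | hv
  · simp [Matrix.mulVec_zero]
  · have hv' : (0:ℝ) < ‖v‖ := norm_pos_iff.mpr hv
    set u : n → ℝ := ‖v‖⁻¹ • v with hu
    have hu1 : ‖u‖ = 1 := by
      rw [hu, norm_smul, norm_inv, norm_norm, inv_mul_cancel₀ hv'.ne']
    have hmem : ‖A.mulVec u‖ ≤ opNormInf A :=
      le_csSup (opNormInf_bddAbove A) ⟨u, hu1, rfl⟩
    have hveq : A.mulVec v = ‖v‖ • A.mulVec u := by
      rw [hu, Matrix.mulVec_smul, smul_smul, mul_inv_cancel₀ hv'.ne', one_smul]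
    rw [hveq, norm_smul, norm_norm, mul_comm]
    exact mul_le_mul_of_nonneg_right hmem hv'.le

lemma step_bound {m n : Type*} [Fintype m] [Fintype n] (σ : ℝ → ℝ) (hσ : LipschitzWith 1 σ)
    (A A' : Matrix m n ℝ) (v v' : n → ℝ) :
    ‖(fun i => σ (A.mulVec v i)) - (fun i => σ (A'.mulVec v' i))‖ ≤
      opNormInf A * ‖v - v'‖ + opNormInf (A - A') * ‖v'‖ := by
  have hC : (0:ℝ) ≤ opNormInf A * ‖v - v'‖ + opNormInf (A - A') * ‖v'‖ := by
    have := opNormInf_nonneg A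
    have := opNormInf_nonneg (A - A')
    positivity
  rw [pi_norm_le_iff_of_nonneg hC]
  intro i
  have h1 : ‖σ (A.mulVec v i) - σ (A'.mulVec v' i)‖ ≤ ‖A.mulVec v i - A'.mulVec v' i‖ := by
    have := hσ.dist_le_mul (A.mulVec v i) (A'.mulVec v' i)
    simpa [Real.dist_eq] using this
  have h2 : ‖A.mulVec v i - A'.mulVec v' i‖ ≤ ‖A.mulVec v - A'.mulVec v'‖ := by
    simpa using norm_le_pi_norm (A.mulVec v - A'.mulVec v') i
  have h3 : A.mulVec v - A'.mulVec v' = A.mulVec (v - v') + (A - A').mulVec v' := by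
    rw [Matrix.mulVec_sub, Matrix.sub_mulVec]; abel
  calc ‖(fun i => σ (A.mulVec v i) - σ (A'.mulVec v' i)) i‖
      ≤ ‖A.mulVec v - A'.mulVec v'‖ := le_trans h1 h2
    _ ≤ ‖A.mulVec (v - v')‖ + ‖(A - A').mulVec v'‖ := by rw [h3]; exact norm_add_le _ _
    _ ≤ opNormInf A * ‖v - v'‖ + opNormInf (A - A') * ‖v'‖ :=
        add_le_add (norm_mulVec_le _ _) (norm_mulVec_le _ _)

/-- for a 1-Lipschitz activation `σ` with `σ 0 = 0` and two bias-free networks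
with the same architecture (layers indexed `0,…,L-1`; paper layer `ℓ` is index `ℓ-1`),
`‖R_θ(x) - R_{θ'}(x)‖∞ ≤ Σ_{ℓ=1}^L (∏_{k=ℓ+1}^L ‖W_k‖_{op,∞}) ‖W_ℓ - W'_ℓ‖_{op,∞}
‖R_{θ'_{ℓ-1}}(x)‖∞`, with `R_{θ'_0}(x) = x` and empty products equal to `1`. -/
theorem statement4 (σ : ℝ → ℝ) (hσ : LipschitzWith 1 σ) (hσ0 : σ 0 = 0)
    (L : ℕ) (hL : 1 ≤ L) (N : ℕ → ℕ)
    (W W' : ∀ ℓ : ℕ, Matrix (Fin (N (ℓ + 1))) (Fin (N ℓ)) ℝ)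
    (x : Fin (N 0) → ℝ) :
    ‖realize σ N W L x - realize σ N W' L x‖ ≤
      ∑ ℓ ∈ Finset.range L,
        (∏ k ∈ Finset.Ico (ℓ + 1) L, opNormInf (W k)) *
          opNormInf (W ℓ - W' ℓ) *
          ‖realize σ N W' ℓ x‖ := by
  clear hL
  induction L with
  | zero => simp [realize]
  | succ L ih =>
    have key : ‖realize σ N W (L + 1) x - realize σ N W' (L + 1) x‖ ≤
        opNormInf (W L) * ‖realize σ N W L x - realize σ N W' L x‖ +
          opNormInf (W L - W' L) * ‖realize σ N W' L x‖ :=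
      step_bound σ hσ (W L) (W' L) (realize σ N W L x) (realize σ N W' L x)
    have hRHS : ∑ ℓ ∈ Finset.range (L + 1),
        (∏ k ∈ Finset.Ico (ℓ + 1) (L + 1), opNormInf (W k)) *
          opNormInf (W ℓ - W' ℓ) * ‖realize σ N W' ℓ x‖
        = opNormInf (W L) * ∑ ℓ ∈ Finset.range L,
            (∏ k ∈ Finset.Ico (ℓ + 1) L, opNormInf (W k)) *
              opNormInf (W ℓ - W' ℓ) * ‖realize σ N W' ℓ x‖
          + opNormInf (W L - W' L) * ‖realize σ N W' L x‖ := by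
      rw [Finset.sum_range_succ, Finset.Ico_self, Finset.prod_empty, one_mul, Finset.mul_sum]
      congr 1
      refine Finset.sum_congr rfl fun ℓ hℓ => ?_
      rw [Finset.prod_Ico_succ_top (Nat.succ_le_of_lt (Finset.mem_range.mp hℓ))]
      ring
    rw [hRHS]
    exact le_trans key (add_le_add_left
      (mul_le_mul_of_nonneg_left ih (opNormInf_nonneg (W L))) _)
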